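/- For all integers N ≥ 2, K ≥ 1, every (N,K) PIR scheme with download cost β satisfies β ≥ β₀ = Σ_{i=1}^{K} N^{-i}; equivalently, Σ_{n=1}^N H(A_n^[1] | Q_1^[1], …, Q_N^[1]) ≥ L·Σ_{i=1}^{K} N^{1-i}. (Proposition 1(ii), download part; the PIR capacity converse.) -/

import Mathlib

/- Shannon entropy framework for finitely-valued random variables on a finite
probability space, and the definition of an (N,K) private information retrieval
(PIR) scheme. -/

open scoped Classical
open Finset

/-- `prob p X a` is the probability that the random variable `X` takes the value `a`,
where `p` is the probability mass function on the finite sample space `Ω`. -/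
noncomputable def prob {Ω α : Type} [Fintype Ω] (p : Ω → ℝ) (X : Ω → α) (a : α) : ℝ :=
  ∑ ω : Ω, if X ω = a then p ω else 0

/-- Shannon entropy (natural base) of a random variable `X` on a finite sample space. -/
noncomputable def ent {Ω α : Type} [Fintype Ω] (p : Ω → ℝ) (X : Ω → α) : ℝ :=
  ∑ a ∈ Finset.univ.image X, Real.negMulLog (prob p X a)

/-- Conditional Shannon entropy `H(X | Y) = H(X, Y) - H(Y)`. -/
noncomputable def condEnt {Ω α β : Type} [Fintype Ω] (p : Ω → ℝ) (X : Ω → α) (Y : Ω → β) : ℝ :=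
  ent p (fun ω => (X ω, Y ω)) - ent p Y

section Toolkit

variable {Ω α β γ : Type} [Fintype Ω] {p : Ω → ℝ}

lemma prob_nonneg (hp0 : ∀ ω, 0 ≤ p ω) (X : Ω → α) (a : α) : 0 ≤ prob p X a :=
  Finset.sum_nonneg fun ω _ => by by_cases h : X ω = a <;> simp [h, hp0 ω]

lemma apply_le_prob (hp0 : ∀ ω, 0 ≤ p ω) (X : Ω → α) (ω : Ω) : p ω ≤ prob p X (X ω) := by
  classical
  have h := Finset.single_le_sum (f := fun ω' => if X ω' = X ω then p ω' else 0)
    (fun ω' _ => by by_cases h : X ω' = X ω <;> simp [h, hp0 ω']) (Finset.mem_univ ω)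
  simpa [prob] using h

/-- If the event `X = a` implies the event `Y = b`, then `P(X=a) ≤ P(Y=b)`. -/
lemma prob_mono (hp0 : ∀ ω, 0 ≤ p ω) {X : Ω → α} {Y : Ω → β} {a : α} {b : β}
    (h : ∀ ω, X ω = a → Y ω = b) : prob p X a ≤ prob p Y b := by
  apply Finset.sum_le_sum
  intro ω _
  by_cases hx : X ω = a
  · simp [hx, h ω hx]
  · simp only [hx, if_false]
    split <;> simp [hp0 ω]

/-- Grouping a sum over `Ω` by the value of `X`. -/
lemma sum_comp_eq [DecidableEq α] (p : Ω → ℝ) (X : Ω → α) (f : α → ℝ) :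
    ∑ a ∈ Finset.univ.image X, prob p X a * f a = ∑ ω, p ω * f (X ω) := by
  classical
  unfold prob
  simp_rw [Finset.sum_mul, ite_mul, zero_mul]
  rw [Finset.sum_comm]
  apply Finset.sum_congr rfl
  intro ω _
  rw [Finset.sum_eq_single (X ω)]
  · simp
  · intro b _ hb
    rw [if_neg (fun h => hb h.symm)]
  · intro h; exact absurd (Finset.mem_image_of_mem X (Finset.mem_univ ω)) h

lemma sum_prob [DecidableEq α] (hp1 : ∑ ω, p ω = 1) (X : Ω → α) :
    ∑ a ∈ Finset.univ.image X, prob p X a = 1 := by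
  have := sum_comp_eq p X (fun _ => 1)
  simpa [hp1] using this

lemma prob_le_one (hp0 : ∀ ω, 0 ≤ p ω) (hp1 : ∑ ω, p ω = 1) (X : Ω → α) (a : α) :
    prob p X a ≤ 1 := by
  by_cases ha : a ∈ Finset.univ.image X
  · calc prob p X a ≤ ∑ b ∈ Finset.univ.image X, prob p X b :=
        Finset.single_le_sum (fun b _ => prob_nonneg hp0 X b) ha
      _ = 1 := sum_prob hp1 X
  · have : prob p X a = 0 := by
      unfold prob
      apply Finset.sum_eq_zero
      intro ω _
      simp only [ite_eq_right_iff]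
      intro h
      exact absurd (h ▸ Finset.mem_image_of_mem X (Finset.mem_univ ω)) ha
    simp [this]

lemma prob_eq_zero_of_not_mem [DecidableEq α] {X : Ω → α} {a : α} (ha : a ∉ Finset.univ.image X) :
    prob p X a = 0 := by
  unfold prob
  apply Finset.sum_eq_zero
  intro ω _
  simp only [ite_eq_right_iff]
  intro h
  exact absurd (h ▸ Finset.mem_image_of_mem X (Finset.mem_univ ω)) ha

/-- Ω-representation of entropy. -/
lemma ent_eq_sum (p : Ω → ℝ) (X : Ω → α) :
    ent p X = ∑ ω, p ω * (-Real.log (prob p X (X ω))) := by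
  rw [ent, ← sum_comp_eq p X (fun a => -Real.log (prob p X a))]
  apply Finset.sum_congr rfl
  intro a _
  rw [Real.negMulLog]
  ring

lemma ent_nonneg (hp0 : ∀ ω, 0 ≤ p ω) (hp1 : ∑ ω, p ω = 1) (X : Ω → α) :
    0 ≤ ent p X :=
  Finset.sum_nonneg fun a _ =>
    Real.negMulLog_nonneg (prob_nonneg hp0 X a) (prob_le_one hp0 hp1 X a)

/-- Entropy only depends on the distribution. -/
lemma ent_congr_dist {X Y : Ω → α} (h : ∀ a, prob p X a = prob p Y a) :
    ent p X = ent p Y := by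
  unfold ent
  have h1 : ∑ a ∈ Finset.univ.image X ∪ Finset.univ.image Y, Real.negMulLog (prob p X a)
      = ∑ a ∈ Finset.univ.image X, Real.negMulLog (prob p X a) := by
    symm
    apply Finset.sum_subset Finset.subset_union_left
    intro a _ ha
    rw [prob_eq_zero_of_not_mem ha, Real.negMulLog_zero]
  have h2 : ∑ a ∈ Finset.univ.image X ∪ Finset.univ.image Y, Real.negMulLog (prob p Y a)
      = ∑ a ∈ Finset.univ.image Y, Real.negMulLog (prob p Y a) := by
    symm
    apply Finset.sum_subset Finset.subset_union_right
    intro a _ ha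
    rw [prob_eq_zero_of_not_mem ha, Real.negMulLog_zero]
  rw [← h1, ← h2]
  apply Finset.sum_congr rfl
  intro a _
  rw [h a]

/-- If `Y` is (pointwise) determined by `X`, then `H(Y) ≤ H(X)`. -/
lemma ent_mono (hp0 : ∀ ω, 0 ≤ p ω) {X : Ω → α} {Y : Ω → β}
    (h : ∀ ω₁ ω₂, X ω₁ = X ω₂ → Y ω₁ = Y ω₂) : ent p Y ≤ ent p X := by
  rw [ent_eq_sum, ent_eq_sum]
  apply Finset.sum_le_sum
  intro ω _
  rcases eq_or_lt_of_le (hp0 ω) with h0 | h0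
  · simp [← h0]
  · apply mul_le_mul_of_nonneg_left _ (le_of_lt h0)
    have hX : 0 < prob p X (X ω) := lt_of_lt_of_le h0 (apply_le_prob hp0 X ω)
    have hXY : prob p X (X ω) ≤ prob p Y (Y ω) :=
      prob_mono hp0 (fun ω' h' => h ω' ω h')
    simpa using Real.log_le_log hX hXY

/-- If `X` and `Y` determine each other, `H(X) = H(Y)`. -/
lemma ent_congr (hp0 : ∀ ω, 0 ≤ p ω) {X : Ω → α} {Y : Ω → β}
    (h : ∀ ω₁ ω₂, X ω₁ = X ω₂ ↔ Y ω₁ = Y ω₂) : ent p X = ent p Y :=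
  le_antisymm (ent_mono hp0 (fun ω₁ ω₂ hh => (h ω₁ ω₂).2 hh))
    (ent_mono hp0 (fun ω₁ ω₂ hh => (h ω₁ ω₂).1 hh))

end Toolkit

section Toolkit2

variable {Ω α β γ : Type} [Fintype Ω] {p : Ω → ℝ}

lemma marginal_snd [DecidableEq β] (p : Ω → ℝ) (Y : Ω → β) (Z : Ω → γ) (z : γ) :
    ∑ b ∈ Finset.univ.image Y, prob p (fun ω => (Y ω, Z ω)) (b, z) = prob p Z z := by
  classical
  unfold prob
  rw [Finset.sum_comm]
  apply Finset.sum_congr rfl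
  intro ω _
  simp_rw [Prod.mk.injEq, ite_and]
  rw [Finset.sum_eq_single (Y ω)]
  · simp
  · intro b _ hb
    rw [if_neg (fun h => hb h.symm)]
  · intro h; exact absurd (Finset.mem_image_of_mem Y (Finset.mem_univ ω)) h

/-- Submodularity: `H(X,Y,Z) + H(Z) ≤ H(X,Z) + H(Y,Z)`. -/
lemma submodular (hp0 : ∀ ω, 0 ≤ p ω) (hp1 : ∑ ω, p ω = 1)
    (X : Ω → α) (Y : Ω → β) (Z : Ω → γ) :
    ent p (fun ω => (X ω, Y ω, Z ω)) + ent p Z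
      ≤ ent p (fun ω => (X ω, Z ω)) + ent p (fun ω => (Y ω, Z ω)) := by
  classical
  set XYZ : Ω → α × β × γ := fun ω => (X ω, Y ω, Z ω) with hXYZ
  set XZ : Ω → α × γ := fun ω => (X ω, Z ω) with hXZ
  set YZ : Ω → β × γ := fun ω => (Y ω, Z ω) with hYZ
  set f : α × β × γ → ℝ := fun t =>
    prob p XZ (t.1, t.2.2) * prob p YZ t.2 / (prob p XYZ t * prob p Z t.2.2) with hf
  set g : α × β × γ → ℝ := fun t =>
    prob p XZ (t.1, t.2.2) * prob p YZ t.2 / prob p Z t.2.2 with hg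
  set g' : (α × γ) × β → ℝ := fun s =>
    prob p XZ s.1 * prob p YZ (s.2, s.1.2) / prob p Z s.1.2 with hg'
  have key : ∑ ω, p ω * f (XYZ ω) ≤ 1 := by
    rw [← sum_comp_eq p XYZ f]
    refine le_trans (Finset.sum_le_sum (g := g) ?_) ?_
    · intro t _
      rcases eq_or_lt_of_le (prob_nonneg hp0 XYZ t) with h0 | h0
      · rw [← h0, zero_mul, hg]
        exact div_nonneg (mul_nonneg (prob_nonneg hp0 _ _) (prob_nonneg hp0 _ _))
          (prob_nonneg hp0 _ _)
      · have hz : 0 < prob p Z t.2.2 :=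
          lt_of_lt_of_le h0 (prob_mono hp0 (fun ω h => by rw [← h]))
        apply le_of_eq
        rw [hf, hg]
        dsimp only
        field_simp
    · -- ∑ t ∈ image XYZ, g t ≤ 1
      have e_inj : ∀ t₁ ∈ Finset.univ.image XYZ, ∀ t₂ ∈ Finset.univ.image XYZ,
          (fun t : α × β × γ => ((t.1, t.2.2), t.2.1)) t₁
            = (fun t : α × β × γ => ((t.1, t.2.2), t.2.1)) t₂ → t₁ = t₂ := by
        intro t₁ _ t₂ _ h
        simp only [Prod.mk.injEq] at h
        obtain ⟨⟨h1, h3⟩, h2⟩ := h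
        exact Prod.ext h1 (Prod.ext h2 h3)
      have himg : ∑ t ∈ Finset.univ.image XYZ, g t
          = ∑ s ∈ (Finset.univ.image XYZ).image
              (fun t : α × β × γ => ((t.1, t.2.2), t.2.1)), g' s := by
        rw [Finset.sum_image (f := g') e_inj]
      rw [himg]; clear himg
      have hsub : (Finset.univ.image XYZ).image
            (fun t : α × β × γ => ((t.1, t.2.2), t.2.1))
          ⊆ (Finset.univ.image XZ) ×ˢ (Finset.univ.image Y) := by
        intro s hs
        rw [Finset.mem_image] at hs
        obtain ⟨t, ht, rfl⟩ := hs
        rw [Finset.mem_image] at ht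
        obtain ⟨ω, -, rfl⟩ := ht
        rw [Finset.mem_product]
        exact ⟨Finset.mem_image_of_mem XZ (Finset.mem_univ ω),
          Finset.mem_image_of_mem Y (Finset.mem_univ ω)⟩
      refine le_trans (Finset.sum_le_sum_of_subset_of_nonneg hsub ?_) ?_
      · intro s _ _
        rw [hg']
        exact div_nonneg (mul_nonneg (prob_nonneg hp0 _ _) (prob_nonneg hp0 _ _))
          (prob_nonneg hp0 _ _)
      · rw [Finset.sum_product]
        have inner : ∀ s ∈ Finset.univ.image XZ,
            (∑ y ∈ Finset.univ.image Y, g' (s, y)) ≤ prob p XZ s := by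
          intro s _
          have hrw : (∑ y ∈ Finset.univ.image Y, g' (s, y))
              = (∑ y ∈ Finset.univ.image Y, prob p YZ (y, s.2)) / prob p Z s.2
                  * prob p XZ s := by
            rw [Finset.sum_div, Finset.sum_mul]
            apply Finset.sum_congr rfl
            intro y _
            rw [hg']
            dsimp only
            ring
          rw [hrw, hYZ, marginal_snd p Y Z s.2]
          rcases eq_or_ne (prob p Z s.2) 0 with h0 | h0
          · rw [h0]
            simp [prob_nonneg hp0 XZ s]
          · rw [div_self h0, one_mul]
        exact le_trans (Finset.sum_le_sum inner) (le_of_eq (sum_prob hp1 XZ))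
  have main : ent p XYZ + ent p Z - ent p XZ - ent p YZ ≤ 0 := by
    rw [ent_eq_sum p XYZ, ent_eq_sum p Z, ent_eq_sum p XZ, ent_eq_sum p YZ]
    rw [← Finset.sum_add_distrib, ← Finset.sum_sub_distrib, ← Finset.sum_sub_distrib]
    have hle : ∀ ω ∈ (Finset.univ : Finset Ω),
        p ω * -Real.log (prob p XYZ (XYZ ω)) + p ω * -Real.log (prob p Z (Z ω))
          - p ω * -Real.log (prob p XZ (XZ ω)) - p ω * -Real.log (prob p YZ (YZ ω))
        ≤ p ω * (f (XYZ ω) - 1) := by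
      intro ω _
      rcases eq_or_lt_of_le (hp0 ω) with h0 | h0
      · rw [← h0]; simp
      · have hxyz : 0 < prob p XYZ (XYZ ω) := lt_of_lt_of_le h0 (apply_le_prob hp0 XYZ ω)
        have hxz : 0 < prob p XZ (XZ ω) := lt_of_lt_of_le h0 (apply_le_prob hp0 XZ ω)
        have hyz : 0 < prob p YZ (YZ ω) := lt_of_lt_of_le h0 (apply_le_prob hp0 YZ ω)
        have hz : 0 < prob p Z (Z ω) := lt_of_lt_of_le h0 (apply_le_prob hp0 Z ω)
        have hratio : 0 < f (XYZ ω) := by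
          rw [hf]
          exact div_pos (mul_pos hxz hyz) (mul_pos hxyz hz)
        have hlog : Real.log (f (XYZ ω)) ≤ f (XYZ ω) - 1 :=
          Real.log_le_sub_one_of_pos hratio
        have hexp : Real.log (f (XYZ ω))
            = Real.log (prob p XZ (XZ ω)) + Real.log (prob p YZ (YZ ω))
              - Real.log (prob p XYZ (XYZ ω)) - Real.log (prob p Z (Z ω)) := by
          rw [hf]
          show Real.log (prob p XZ (XZ ω) * prob p YZ (YZ ω)
            / (prob p XYZ (XYZ ω) * prob p Z (Z ω))) = _
          rw [Real.log_div (by positivity) (by positivity), Real.log_mul (ne_of_gt hxz)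
            (ne_of_gt hyz), Real.log_mul (ne_of_gt hxyz) (ne_of_gt hz)]
          ring
        calc p ω * -Real.log (prob p XYZ (XYZ ω)) + p ω * -Real.log (prob p Z (Z ω))
              - p ω * -Real.log (prob p XZ (XZ ω)) - p ω * -Real.log (prob p YZ (YZ ω))
            = p ω * Real.log (f (XYZ ω)) := by rw [hexp]; ring
          _ ≤ p ω * (f (XYZ ω) - 1) := mul_le_mul_of_nonneg_left hlog (le_of_lt h0)
    refine le_trans (Finset.sum_le_sum hle) ?_
    have : ∑ ω, p ω * (f (XYZ ω) - 1) = (∑ ω, p ω * f (XYZ ω)) - 1 := by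
      simp_rw [mul_sub, mul_one]
      rw [Finset.sum_sub_distrib, hp1]
    rw [this]
    linarith
  linarith

end Toolkit2

section Toolkit3

variable {Ω α β γ : Type} [Fintype Ω] {p : Ω → ℝ}

lemma condEnt_nonneg (hp0 : ∀ ω, 0 ≤ p ω) (X : Ω → α) (Y : Ω → β) :
    0 ≤ condEnt p X Y := by
  have := ent_mono hp0 (X := fun ω => (X ω, Y ω)) (Y := Y)
    (fun ω₁ ω₂ h => congrArg Prod.snd h)
  rw [condEnt]
  linarith

/-- `H(X | Y, Z) ≤ H(X | Z)`: further conditioning reduces entropy. -/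
lemma condEnt_pair_le (hp0 : ∀ ω, 0 ≤ p ω) (hp1 : ∑ ω, p ω = 1)
    (X : Ω → α) (Y : Ω → β) (Z : Ω → γ) :
    condEnt p X (fun ω => (Y ω, Z ω)) ≤ condEnt p X Z := by
  have := submodular hp0 hp1 X Y Z
  rw [condEnt, condEnt]
  linarith

lemma ent_pair_congr_right (hp0 : ∀ ω, 0 ≤ p ω) {X : Ω → α} {Y : Ω → β} {Z : Ω → γ}
    (h : ∀ ω₁ ω₂, Y ω₁ = Y ω₂ ↔ Z ω₁ = Z ω₂) :
    ent p (fun ω => (X ω, Y ω)) = ent p (fun ω => (X ω, Z ω)) :=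
  ent_congr hp0 (by
    intro ω₁ ω₂
    simp only [Prod.mk.injEq]
    exact and_congr Iff.rfl (h ω₁ ω₂))

/-- Chain rule: `H(X, Y | Z) = H(X | Y, Z) + H(Y | Z)`. -/
lemma condEnt_chain (hp0 : ∀ ω, 0 ≤ p ω) (X : Ω → α) (Y : Ω → β) (Z : Ω → γ) :
    condEnt p (fun ω => (X ω, Y ω)) Z
      = condEnt p X (fun ω => (Y ω, Z ω)) + condEnt p Y Z := by
  rw [condEnt, condEnt, condEnt]
  have : ent p (fun ω => ((X ω, Y ω), Z ω)) = ent p (fun ω => (X ω, Y ω, Z ω)) :=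
    ent_congr hp0 (by intro ω₁ ω₂; simp only [Prod.mk.injEq]; tauto)
  rw [this]
  ring

/-- `H(Y | Z) ≤ H(X, Y | Z)`. -/
lemma condEnt_le_pair (hp0 : ∀ ω, 0 ≤ p ω) (X : Ω → α) (Y : Ω → β) (Z : Ω → γ) :
    condEnt p Y Z ≤ condEnt p (fun ω => (X ω, Y ω)) Z := by
  rw [condEnt, condEnt]
  have := ent_mono hp0 (X := fun ω => ((X ω, Y ω), Z ω)) (Y := fun ω => (Y ω, Z ω))
    (by intro ω₁ ω₂ h; simp only [Prod.mk.injEq] at h ⊢; tauto)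
  linarith

lemma nonempty_of_sum_one (hp1 : ∑ ω, p ω = 1) : Nonempty Ω := by
  by_contra h
  rw [not_nonempty_iff] at h
  rw [Finset.univ_eq_empty, Finset.sum_empty] at hp1
  exact one_ne_zero hp1.symm

lemma ent_const (hp1 : ∑ ω, p ω = 1) (c : γ) : ent p (fun _ => c) = 0 := by
  have hne : Nonempty Ω := nonempty_of_sum_one hp1
  rw [ent]
  have himg : Finset.univ.image (fun _ : Ω => c) = {c} :=
    Finset.image_const Finset.univ_nonempty c
  rw [himg, Finset.sum_singleton]
  have : prob p (fun _ : Ω => c) c = 1 := by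
    rw [prob]
    simp [hp1]
  rw [this, Real.negMulLog_one]

/-- Subadditivity: `H(X, Y) ≤ H(X) + H(Y)`. -/
lemma ent_pair_le (hp0 : ∀ ω, 0 ≤ p ω) (hp1 : ∑ ω, p ω = 1) (X : Ω → α) (Y : Ω → β) :
    ent p (fun ω => (X ω, Y ω)) ≤ ent p X + ent p Y := by
  have h := submodular hp0 hp1 X Y (fun _ => ())
  have h1 : ent p (fun ω => (X ω, Y ω, ())) = ent p (fun ω => (X ω, Y ω)) :=
    ent_congr hp0 (by intro ω₁ ω₂; simp only [Prod.mk.injEq]; tauto)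
  have h2 : ent p (fun ω => (X ω, ())) = ent p X :=
    ent_congr hp0 (by intro ω₁ ω₂; simp only [Prod.mk.injEq]; tauto)
  have h3 : ent p (fun ω => (Y ω, ())) = ent p Y :=
    ent_congr hp0 (by intro ω₁ ω₂; simp only [Prod.mk.injEq]; tauto)
  have h4 : ent p (fun _ : Ω => ()) = 0 := ent_const hp1 ()
  rw [h1, h2, h3, h4] at h
  linarith

/-- Independent pair: `H(X, Y) = H(X) + H(Y)`. -/
lemma ent_pair_of_indep (hp0 : ∀ ω, 0 ≤ p ω) {X : Ω → α} {Y : Ω → β}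
    (hfac : ∀ a b, prob p (fun ω => (X ω, Y ω)) (a, b) = prob p X a * prob p Y b) :
    ent p (fun ω => (X ω, Y ω)) = ent p X + ent p Y := by
  rw [ent_eq_sum, ent_eq_sum, ent_eq_sum, ← Finset.sum_add_distrib]
  apply Finset.sum_congr rfl
  intro ω _
  rcases eq_or_lt_of_le (hp0 ω) with h0 | h0
  · rw [← h0]; ring
  · have hxy := lt_of_lt_of_le h0 (apply_le_prob hp0 (fun ω => (X ω, Y ω)) ω)
    rw [hfac (X ω) (Y ω)] at hxy
    rcases mul_pos_iff.1 hxy with ⟨hx, hy⟩ | ⟨hx, _⟩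
    · rw [hfac (X ω) (Y ω), Real.log_mul (ne_of_gt hx) (ne_of_gt hy)]
      ring
    · exact absurd (prob_nonneg hp0 X (X ω)) (not_le.2 hx)

/-- Independent tuple: `H(W₁,…,W_K) = ∑ H(Wᵢ)`. -/
lemma ent_tuple_of_indep {ι : Type} [Fintype ι] (hp0 : ∀ ω, 0 ≤ p ω) (W : ι → Ω → α)
    (hfac : ∀ w : ι → α, prob p (fun ω => fun i => W i ω) w = ∏ i, prob p (W i) (w i)) :
    ent p (fun ω => fun i => W i ω) = ∑ i, ent p (W i) := by
  rw [ent_eq_sum]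
  have hR : ∑ i, ent p (W i) = ∑ ω, ∑ i, p ω * (-Real.log (prob p (W i) (W i ω))) := by
    rw [Finset.sum_comm]
    exact Finset.sum_congr rfl (fun i _ => ent_eq_sum p (W i))
  rw [hR]
  apply Finset.sum_congr rfl
  intro ω _
  rcases eq_or_lt_of_le (hp0 ω) with h0 | h0
  · rw [← h0]; simp
  · have htup := lt_of_lt_of_le h0 (apply_le_prob hp0 (fun ω => fun i => W i ω) ω)
    rw [hfac (fun i => W i ω)] at htup
    have hpos : ∀ i ∈ (Finset.univ : Finset ι), 0 < prob p (W i) (W i ω) := by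
      intro i _
      rcases eq_or_lt_of_le (prob_nonneg hp0 (W i) (W i ω)) with hz | hz
      · exfalso
        rw [Finset.prod_eq_zero (Finset.mem_univ i) hz.symm] at htup
        exact lt_irrefl 0 htup
      · exact hz
    rw [hfac (fun i => W i ω), Real.log_prod (fun i hi => ne_of_gt (hpos i hi))]
    rw [neg_eq_neg_one_mul, ← mul_assoc, Finset.mul_sum]
    apply Finset.sum_congr rfl
    intro i _
    ring

/-- Expectation of a product of functions of independent variables factorizes. -/
lemma exp_mul_of_indep [DecidableEq α] [DecidableEq β] {X : Ω → α} {Y : Ω → β}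
    (hfac : ∀ a b, prob p (fun ω => (X ω, Y ω)) (a, b) = prob p X a * prob p Y b)
    (u : α → ℝ) (v : β → ℝ) :
    ∑ ω, p ω * (u (X ω) * v (Y ω))
      = (∑ ω, p ω * u (X ω)) * (∑ ω, p ω * v (Y ω)) := by
  classical
  rw [← sum_comp_eq p X u, ← sum_comp_eq p Y v,
    ← sum_comp_eq p (fun ω => (X ω, Y ω)) (fun t => u t.1 * v t.2)]
  have hsub : Finset.univ.image (fun ω => (X ω, Y ω))
      ⊆ (Finset.univ.image X) ×ˢ (Finset.univ.image Y) := by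
    intro t ht
    rw [Finset.mem_image] at ht
    obtain ⟨ω, -, rfl⟩ := ht
    rw [Finset.mem_product]
    exact ⟨Finset.mem_image_of_mem X (Finset.mem_univ ω),
      Finset.mem_image_of_mem Y (Finset.mem_univ ω)⟩
  rw [Finset.sum_subset hsub (fun t _ ht => by
    rw [prob_eq_zero_of_not_mem ht, zero_mul])]
  rw [Finset.sum_mul_sum, ← Finset.sum_product']
  apply Finset.sum_congr rfl
  intro t _
  rw [hfac t.1 t.2]
  ring

/-- Conditional independence (pointwise on the support) gives `H(X|Y) = H(X|Z)`. -/
lemma condEnt_eq_of_ci (hp0 : ∀ ω, 0 ≤ p ω) {X : Ω → α} {Y : Ω → β} {Z : Ω → γ}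
    (h : ∀ ω, 0 < p ω →
      prob p (fun ω' => (X ω', Y ω')) (X ω, Y ω) * prob p Z (Z ω)
        = prob p (fun ω' => (X ω', Z ω')) (X ω, Z ω) * prob p Y (Y ω)) :
    condEnt p X Y = condEnt p X Z := by
  rw [condEnt, condEnt, ent_eq_sum p (fun ω => (X ω, Y ω)), ent_eq_sum p Y,
    ent_eq_sum p (fun ω => (X ω, Z ω)), ent_eq_sum p Z,
    ← Finset.sum_sub_distrib, ← Finset.sum_sub_distrib]
  apply Finset.sum_congr rfl
  intro ω _
  rcases eq_or_lt_of_le (hp0 ω) with h0 | h0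
  · rw [← h0]; ring
  · have hxy := lt_of_lt_of_le h0 (apply_le_prob hp0 (fun ω' => (X ω', Y ω')) ω)
    have hxz := lt_of_lt_of_le h0 (apply_le_prob hp0 (fun ω' => (X ω', Z ω')) ω)
    have hy := lt_of_lt_of_le h0 (apply_le_prob hp0 Y ω)
    have hz := lt_of_lt_of_le h0 (apply_le_prob hp0 Z ω)
    have hlog : Real.log (prob p (fun ω' => (X ω', Y ω')) (X ω, Y ω))
        + Real.log (prob p Z (Z ω))
        = Real.log (prob p (fun ω' => (X ω', Z ω')) (X ω, Z ω))
          + Real.log (prob p Y (Y ω)) := by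
      rw [← Real.log_mul (ne_of_gt hxy) (ne_of_gt hz),
        ← Real.log_mul (ne_of_gt hxz) (ne_of_gt hy), h ω h0]
    have e1 : p ω * -Real.log (prob p (fun ω' => (X ω', Y ω')) (X ω, Y ω))
        - p ω * -Real.log (prob p Y (Y ω))
        = p ω * (Real.log (prob p Y (Y ω))
            - Real.log (prob p (fun ω' => (X ω', Y ω')) (X ω, Y ω))) := by ring
    have e2 : p ω * -Real.log (prob p (fun ω' => (X ω', Z ω')) (X ω, Z ω))
        - p ω * -Real.log (prob p Z (Z ω))
        = p ω * (Real.log (prob p Z (Z ω))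
            - Real.log (prob p (fun ω' => (X ω', Z ω')) (X ω, Z ω))) := by ring
    rw [e1, e2]
    congr 1
    linarith

end Toolkit3

lemma ite_congr_prop {σ : Sort u} {c d : Prop} {i1 : Decidable c} {i2 : Decidable d}
    (h : c ↔ d) (x y : σ) : (@ite _ c i1 x y) = (@ite _ d i2 x y) := by
  by_cases hc : c
  · rw [if_pos hc, if_pos (h.1 hc)]
  · rw [if_neg hc, if_neg (fun hd => hc (h.2 hd))]

lemma condEnt_congr_right {Ω α β γ : Type} [Fintype Ω] {p : Ω → ℝ}
    (hp0 : ∀ ω, 0 ≤ p ω) {X : Ω → α} {Y : Ω → β} {Z : Ω → γ}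
    (h : ∀ ω₁ ω₂, Y ω₁ = Y ω₂ ↔ Z ω₁ = Z ω₂) :
    condEnt p X Y = condEnt p X Z := by
  rw [condEnt, condEnt, ent_pair_congr_right hp0 h, ent_congr hp0 h]

lemma condEnt_congr_left {Ω α β γ : Type} [Fintype Ω] {p : Ω → ℝ}
    (hp0 : ∀ ω, 0 ≤ p ω) {X : Ω → α} {X' : Ω → β} {Z : Ω → γ}
    (h : ∀ ω₁ ω₂, X ω₁ = X ω₂ ↔ X' ω₁ = X' ω₂) :
    condEnt p X Z = condEnt p X' Z := by
  rw [condEnt, condEnt]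
  congr 1
  exact ent_congr hp0 (by
    intro ω₁ ω₂
    simp only [Prod.mk.injEq]
    exact and_congr (h ω₁ ω₂) Iff.rfl)

/-- An `(N, K)` private information retrieval scheme:
`K` mutually independent messages `W` with entropy `L` each, stored contents `S` at `N`
servers (deterministic functions of the messages), a random key `F` independent of the
messages, queries `Q` (deterministic functions of `F`), answers `A` (deterministic
functions of the query and the stored content, with an answer function not depending on
the desired index), correctness and privacy. Messages/servers are indexed `0, …, K-1`
and `0, …, N-1` (paper index `i` corresponds to index `i - 1` here). -/
structure PIRScheme (N K : ℕ) where
  Ω : Type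
  [finΩ : Fintype Ω]
  Msg : Type
  Sto : Type
  Qry : Type
  Ans : Type
  Key : Type
  p : Ω → ℝ
  p_nonneg : ∀ ω, 0 ≤ p ω
  p_sum : ∑ ω : Ω, p ω = 1
  L : ℝ
  L_pos : 0 < L
  W : Fin K → Ω → Msg
  S : Fin N → Ω → Sto
  F : Ω → Key
  Q : Fin K → Fin N → Ω → Qry
  A : Fin K → Fin N → Ω → Ans
  W_indep : ∀ w : Fin K → Msg,
    prob p (fun ω => (fun k => W k ω)) w = ∏ k : Fin K, prob p (W k) (w k)
  W_ent : ∀ k, ent p (W k) = L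
  F_indep : ∀ (f : Key) (w : Fin K → Msg),
    prob p (fun ω => (F ω, fun k => W k ω)) (f, w)
      = prob p F f * prob p (fun ω => (fun k => W k ω)) w
  S_det : ∀ n : Fin N, ∃ g : (Fin K → Msg) → Sto, ∀ ω, S n ω = g (fun k => W k ω)
  Q_det : ∀ (k : Fin K) (n : Fin N), ∃ g : Key → Qry, ∀ ω, Q k n ω = g (F ω)
  A_det : ∀ n : Fin N, ∃ φ : Qry → Sto → Ans, ∀ (k : Fin K) (ω : Ω), A k n ω = φ (Q k n ω) (S n ω)
  correct : ∀ k : Fin K, ∃ g : (Fin N → Ans) → (Fin N → Qry) → Msg,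
    ∀ ω, W k ω = g (fun n => A k n ω) (fun n => Q k n ω)
  privacy : ∀ (n : Fin N) (k k' : Fin K) (q : Qry),
    prob p (Q k n) q = prob p (Q k' n) q

attribute [instance] PIRScheme.finΩ

/-- The set of server (or message) indices `{i : i < m}`, i.e. paper indices `1, …, m`. -/
def finLt (N m : ℕ) : Finset (Fin N) := Finset.univ.filter (fun i => i.val < m)

/-- The set of server (or message) indices `{i : m ≤ i}`, i.e. paper indices `m+1, …, N`. -/
def finGe (N m : ℕ) : Finset (Fin N) := Finset.univ.filter (fun i => m ≤ i.val)

namespace PIRScheme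

variable {N K : ℕ}

/-- Informational normalized storage cost `α = (1/(N L)) ∑ₙ H(Sₙ)`. -/
noncomputable def alpha (s : PIRScheme N K) : ℝ :=
  (1 / (N * s.L)) * ∑ n : Fin N, ent s.p (s.S n)

/-- Informational normalized download cost for desired message `k`:
`(1/(N L)) ∑ₙ H(Aₙ^[k] | Q₁^[k], …, Q_N^[k])`.  The download cost `β` of the scheme is
`betaAt` at the first message. -/
noncomputable def betaAt (s : PIRScheme N K) (k : Fin K) : ℝ :=
  (1 / (N * s.L)) *
    ∑ n : Fin N, condEnt s.p (s.A k n) (fun ω => (fun n' : Fin N => s.Q k n' ω))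

/-- The joint random variable `S_B = (Sₙ : n ∈ B)`. -/
noncomputable def jointS (s : PIRScheme N K) (B : Finset (Fin N)) : s.Ω → (B → s.Sto) :=
  fun ω i => s.S i.1 ω

/-- The joint random variable `A_B^[k] = (Aₙ^[k] : n ∈ B)`. -/
noncomputable def jointA (s : PIRScheme N K) (k : Fin K) (B : Finset (Fin N)) :
    s.Ω → (B → s.Ans) :=
  fun ω i => s.A k i.1 ω

/-- The joint random variable `W_C = (Wₖ : k ∈ C)`. -/
noncomputable def jointW (s : PIRScheme N K) (C : Finset (Fin K)) : s.Ω → (C → s.Msg) :=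
  fun ω i => s.W i.1 ω

/-- A scheme is symmetric if
`H(S_A, A_B^[k] | F, W_C) = H(S_{π(A)}, A_{π(B)}^[π'(k)] | F, W_{π'(C)})` for all
permutations `π` of the servers and `π'` of the messages. -/
def Symmetric (s : PIRScheme N K) : Prop :=
  ∀ (A B : Finset (Fin N)) (C : Finset (Fin K)) (k : Fin K)
    (π : Equiv.Perm (Fin N)) (π' : Equiv.Perm (Fin K)),
    condEnt s.p (fun ω => (s.jointS A ω, s.jointA k B ω)) (fun ω => (s.F ω, s.jointW C ω))
      = condEnt s.p (fun ω => (s.jointS (A.image ⇑π) ω, s.jointA (π' k) (B.image ⇑π) ω))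
          (fun ω => (s.F ω, s.jointW (C.image ⇑π') ω))

end PIRScheme


namespace PIRScheme

variable {N K : ℕ}

/-- The full tuple of messages. -/
noncomputable def Wvec (s : PIRScheme N K) : s.Ω → (Fin K → s.Msg) := fun ω k => s.W k ω

/-- The full tuple of answers for desired index `k`. -/
noncomputable def Avec (s : PIRScheme N K) (k : Fin K) : s.Ω → (Fin N → s.Ans) :=
  fun ω n => s.A k n ω

variable (s : PIRScheme N K)

lemma hfacFW : ∀ (f : s.Key) (w : Fin K → s.Msg),
    prob s.p (fun ω => (s.F ω, s.Wvec ω)) (f, w)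
      = prob s.p s.F f * prob s.p s.Wvec w := fun f w => s.F_indep f w

/-- Splitting an expectation of indicators (classical-instance version). -/
lemma split_FW0 (P : s.Key → Prop) (V : (Fin K → s.Msg) → Prop) :
    (∑ ω, if P (s.F ω) ∧ V (s.Wvec ω) then s.p ω else 0)
      = (∑ ω, if P (s.F ω) then s.p ω else 0)
        * (∑ ω, if V (s.Wvec ω) then s.p ω else 0) := by
  classical
  have h := exp_mul_of_indep (p := s.p) (hfac := s.hfacFW)
    (u := fun f => if P f then (1:ℝ) else 0) (v := fun w => if V w then (1:ℝ) else 0)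
  have c1 : ∀ ω, s.p ω * ((if P (s.F ω) then (1:ℝ) else 0)
      * (if V (s.Wvec ω) then (1:ℝ) else 0))
      = (if P (s.F ω) ∧ V (s.Wvec ω) then s.p ω else 0) := by
    intro ω
    by_cases h1 : P (s.F ω) <;> by_cases h2 : V (s.Wvec ω) <;> simp [h1, h2]
  have c2 : ∀ ω, s.p ω * (if P (s.F ω) then (1:ℝ) else 0)
      = (if P (s.F ω) then s.p ω else 0) := by
    intro ω; by_cases h1 : P (s.F ω) <;> simp [h1]
  have c3 : ∀ ω, s.p ω * (if V (s.Wvec ω) then (1:ℝ) else 0)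
      = (if V (s.Wvec ω) then s.p ω else 0) := by
    intro ω; by_cases h1 : V (s.Wvec ω) <;> simp [h1]
  rw [← Finset.sum_congr rfl (fun ω _ => c1 ω), ← Finset.sum_congr rfl (fun ω _ => c2 ω),
    ← Finset.sum_congr rfl (fun ω _ => c3 ω)]
  exact h

/-- Splitting an expectation of indicators of events on `F` and on the messages. -/
lemma split_FW (P : s.Key → Prop) (V : (Fin K → s.Msg) → Prop)
    {i1 : ∀ ω : s.Ω, Decidable (P (s.F ω) ∧ V (s.Wvec ω))}
    {i2 : ∀ ω : s.Ω, Decidable (P (s.F ω))} {i3 : ∀ ω : s.Ω, Decidable (V (s.Wvec ω))} :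
    (∑ ω, @ite _ (P (s.F ω) ∧ V (s.Wvec ω)) (i1 ω) (s.p ω) 0)
      = (∑ ω, @ite _ (P (s.F ω)) (i2 ω) (s.p ω) 0)
        * (∑ ω, @ite _ (V (s.Wvec ω)) (i3 ω) (s.p ω) 0) := by
  classical
  have h0 := s.split_FW0 P V
  refine Eq.trans ?_ (Eq.trans h0 ?_)
  · exact Finset.sum_congr rfl (fun ω _ => ite_congr_prop Iff.rfl _ _)
  · exact congrArg₂ HMul.hMul
      (Finset.sum_congr rfl (fun ω _ => ite_congr_prop Iff.rfl _ _))
      (Finset.sum_congr rfl (fun ω _ => ite_congr_prop Iff.rfl _ _))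

/-- The "answer–query–messages" probability factorization, for a fixed answer map. -/
lemma prob_AQW_factor (k : Fin K) (n : Fin N) (C : Finset (Fin K))
    (φ : s.Qry → s.Sto → s.Ans) (hφ : ∀ (k : Fin K) (ω : s.Ω), s.A k n ω = φ (s.Q k n ω) (s.S n ω))
    (gS : (Fin K → s.Msg) → s.Sto) (hS : ∀ ω, s.S n ω = gS (fun k => s.W k ω))
    (gQ : s.Key → s.Qry) (hQ : ∀ ω, s.Q k n ω = gQ (s.F ω))
    (a : s.Ans) (q : s.Qry) (w : ↥C → s.Msg) :
    prob s.p (fun ω => (s.A k n ω, s.Q k n ω, s.jointW C ω)) (a, q, w)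
      = prob s.p (s.Q k n) q
        * (∑ ω, if (φ q (gS (s.Wvec ω)) = a ∧ (fun i : ↥C => s.Wvec ω i.1) = w)
            then s.p ω else 0) := by
  classical
  have step1 : prob s.p (fun ω => (s.A k n ω, s.Q k n ω, s.jointW C ω)) (a, q, w)
      = ∑ ω, if (gQ (s.F ω) = q)
          ∧ (φ q (gS (s.Wvec ω)) = a ∧ (fun i : ↥C => s.Wvec ω i.1) = w)
          then s.p ω else 0 := by
    apply Finset.sum_congr rfl
    intro ω _
    apply ite_congr_prop _ _ _
    simp only [Prod.mk.injEq]
    constructor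
    · rintro ⟨hA, hQq, hw⟩
      refine ⟨by rw [← hQ ω]; exact hQq, ?_, hw⟩
      rw [← hA, hφ k ω, hS ω, hQq]
      rfl
    · rintro ⟨h1, h2, h3⟩
      have hq : s.Q k n ω = q := by rw [hQ ω, h1]
      refine ⟨?_, hq, h3⟩
      rw [hφ k ω, hS ω, hq]
      exact h2
  rw [step1, s.split_FW (fun f => gQ f = q)
    (fun w' => φ q (gS w') = a ∧ (fun i : ↥C => w' i.1) = w)]
  congr 1
  apply Finset.sum_congr rfl
  intro ω _
  rw [hQ ω]

/-- Privacy: the triple `(Aₙ, Qₙ, W_C)` has the same distribution for all desired indices. -/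
lemma dist_AQW (n : Fin N) (C : Finset (Fin K)) (k k' : Fin K)
    (t : s.Ans × s.Qry × (↥C → s.Msg)) :
    prob s.p (fun ω => (s.A k n ω, s.Q k n ω, s.jointW C ω)) t
      = prob s.p (fun ω => (s.A k' n ω, s.Q k' n ω, s.jointW C ω)) t := by
  obtain ⟨φ, hφ⟩ := s.A_det n
  obtain ⟨gS, hS⟩ := s.S_det n
  obtain ⟨gQ, hQ⟩ := s.Q_det k n
  obtain ⟨gQ', hQ'⟩ := s.Q_det k' n
  obtain ⟨a, q, w⟩ := t
  rw [s.prob_AQW_factor k n C φ hφ gS hS gQ hQ a q w,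
    s.prob_AQW_factor k' n C φ hφ gS hS gQ' hQ' a q w,
    s.privacy n k k' q]

/-- The "query–messages" probability factorization. -/
lemma prob_QW_factor (k : Fin K) (n : Fin N) (C : Finset (Fin K))
    (gQ : s.Key → s.Qry) (hQ : ∀ ω, s.Q k n ω = gQ (s.F ω))
    (q : s.Qry) (w : ↥C → s.Msg) :
    prob s.p (fun ω => (s.Q k n ω, s.jointW C ω)) (q, w)
      = prob s.p (s.Q k n) q
        * (∑ ω, if (fun i : ↥C => s.Wvec ω i.1) = w then s.p ω else 0) := by
  classical
  have step1 : prob s.p (fun ω => (s.Q k n ω, s.jointW C ω)) (q, w)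
      = ∑ ω, if (gQ (s.F ω) = q)
          ∧ ((fun i : ↥C => s.Wvec ω i.1) = w) then s.p ω else 0 := by
    apply Finset.sum_congr rfl
    intro ω _
    apply ite_congr_prop _ _ _
    simp only [Prod.mk.injEq]
    rw [hQ ω]
    exact Iff.rfl
  rw [step1, s.split_FW (fun f => gQ f = q)
    (fun w' => (fun i : ↥C => w' i.1) = w)]
  congr 1
  apply Finset.sum_congr rfl
  intro ω _
  rw [hQ ω]

/-- Privacy: the pair `(Qₙ, W_C)` has the same distribution for all desired indices. -/
lemma dist_QW (n : Fin N) (C : Finset (Fin K)) (k k' : Fin K)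
    (t : s.Qry × (↥C → s.Msg)) :
    prob s.p (fun ω => (s.Q k n ω, s.jointW C ω)) t
      = prob s.p (fun ω => (s.Q k' n ω, s.jointW C ω)) t := by
  obtain ⟨gQ, hQ⟩ := s.Q_det k n
  obtain ⟨gQ', hQ'⟩ := s.Q_det k' n
  obtain ⟨q, w⟩ := t
  rw [s.prob_QW_factor k n C gQ hQ q w, s.prob_QW_factor k' n C gQ' hQ' q w,
    s.privacy n k k' q]

/-- Privacy at the level of conditional entropies. -/
lemma condEnt_privacy (n : Fin N) (C : Finset (Fin K)) (k k' : Fin K) :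
    condEnt s.p (s.A k n) (fun ω => (s.Q k n ω, s.jointW C ω))
      = condEnt s.p (s.A k' n) (fun ω => (s.Q k' n ω, s.jointW C ω)) := by
  rw [condEnt, condEnt,
    ent_congr_dist (fun t => s.dist_AQW n C k k' t),
    ent_congr_dist (fun t => s.dist_QW n C k k' t)]

/-- The "answer–key–messages" probability factorization. -/
lemma prob_AFW_factor (k : Fin K) (n : Fin N) (C : Finset (Fin K))
    (φ : s.Qry → s.Sto → s.Ans) (hφ : ∀ (k : Fin K) (ω : s.Ω), s.A k n ω = φ (s.Q k n ω) (s.S n ω))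
    (gS : (Fin K → s.Msg) → s.Sto) (hS : ∀ ω, s.S n ω = gS (fun k => s.W k ω))
    (gQ : s.Key → s.Qry) (hQ : ∀ ω, s.Q k n ω = gQ (s.F ω))
    (a : s.Ans) (f : s.Key) (w : ↥C → s.Msg) :
    prob s.p (fun ω => (s.A k n ω, s.F ω, s.jointW C ω)) (a, f, w)
      = prob s.p s.F f
        * (∑ ω, if (φ (gQ f) (gS (s.Wvec ω)) = a ∧ (fun i : ↥C => s.Wvec ω i.1) = w)
            then s.p ω else 0) := by
  classical
  have step1 : prob s.p (fun ω => (s.A k n ω, s.F ω, s.jointW C ω)) (a, f, w)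
      = ∑ ω, if (s.F ω = f)
          ∧ (φ (gQ f) (gS (s.Wvec ω)) = a ∧ (fun i : ↥C => s.Wvec ω i.1) = w)
          then s.p ω else 0 := by
    apply Finset.sum_congr rfl
    intro ω _
    apply ite_congr_prop _ _ _
    simp only [Prod.mk.injEq]
    constructor
    · rintro ⟨hA, hF, hw⟩
      refine ⟨hF, ?_, hw⟩
      rw [← hA, hφ k ω, hS ω, hQ ω, hF]
      rfl
    · rintro ⟨h1, h2, h3⟩
      refine ⟨?_, h1, h3⟩
      rw [hφ k ω, hS ω, hQ ω, h1]
      exact h2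
  rw [step1, s.split_FW (fun f' => f' = f)
    (fun w' => φ (gQ f) (gS w') = a ∧ (fun i : ↥C => w' i.1) = w)]
  rfl

/-- The "key–messages" probability factorization. -/
lemma prob_FW_factor (C : Finset (Fin K)) (f : s.Key) (w : ↥C → s.Msg) :
    prob s.p (fun ω => (s.F ω, s.jointW C ω)) (f, w)
      = prob s.p s.F f
        * (∑ ω, if (fun i : ↥C => s.Wvec ω i.1) = w then s.p ω else 0) := by
  classical
  have step1 : prob s.p (fun ω => (s.F ω, s.jointW C ω)) (f, w)
      = ∑ ω, if (s.F ω = f)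
          ∧ ((fun i : ↥C => s.Wvec ω i.1) = w) then s.p ω else 0 := by
    apply Finset.sum_congr rfl
    intro ω _
    apply ite_congr_prop _ _ _
    simp only [Prod.mk.injEq]
    exact Iff.rfl
  rw [step1, s.split_FW (fun f' => f' = f)
    (fun w' => (fun i : ↥C => w' i.1) = w)]
  rfl

/-- Bridge: conditioning on the full key is the same as conditioning on the own query. -/
lemma condEnt_bridge (k : Fin K) (n : Fin N) (C : Finset (Fin K)) :
    condEnt s.p (s.A k n) (fun ω => (s.F ω, s.jointW C ω))
      = condEnt s.p (s.A k n) (fun ω => (s.Q k n ω, s.jointW C ω)) := by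
  classical
  obtain ⟨φ, hφ⟩ := s.A_det n
  obtain ⟨gS, hS⟩ := s.S_det n
  obtain ⟨gQ, hQ⟩ := s.Q_det k n
  apply condEnt_eq_of_ci s.p_nonneg
  intro ω hω
  show prob s.p (fun ω' => (s.A k n ω', s.F ω', s.jointW C ω'))
        (s.A k n ω, s.F ω, s.jointW C ω)
      * prob s.p (fun ω' => (s.Q k n ω', s.jointW C ω')) (s.Q k n ω, s.jointW C ω)
    = prob s.p (fun ω' => (s.A k n ω', s.Q k n ω', s.jointW C ω'))
        (s.A k n ω, s.Q k n ω, s.jointW C ω)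
      * prob s.p (fun ω' => (s.F ω', s.jointW C ω')) (s.F ω, s.jointW C ω)
  rw [s.prob_AFW_factor k n C φ hφ gS hS gQ hQ, s.prob_FW_factor C,
    s.prob_QW_factor k n C gQ hQ, s.prob_AQW_factor k n C φ hφ gS hS gQ hQ, hQ ω]
  ring

end PIRScheme

namespace PIRScheme

variable {N K : ℕ} (s : PIRScheme N K)

lemma ent_F_Wvec : ent s.p (fun ω => (s.F ω, s.Wvec ω)) = ent s.p s.F + K * s.L := by
  rw [ent_pair_of_indep s.p_nonneg s.hfacFW]
  congr 1
  have h : ent s.p s.Wvec = ∑ k : Fin K, ent s.p (s.W k) :=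
    ent_tuple_of_indep s.p_nonneg s.W s.W_indep
  rw [h]
  rw [Finset.sum_congr rfl (fun k _ => s.W_ent k), Finset.sum_const, Finset.card_univ,
    Fintype.card_fin, nsmul_eq_mul]

lemma ent_F_jointW_le (D : Finset (Fin K)) :
    ent s.p (fun ω => (s.F ω, s.jointW D ω)) ≤ ent s.p s.F + D.card * s.L := by
  classical
  induction D using Finset.induction_on with
  | empty =>
      have h : ent s.p (fun ω => (s.F ω, s.jointW (∅ : Finset (Fin K)) ω)) = ent s.p s.F := by
        apply ent_congr s.p_nonneg
        intro ω₁ ω₂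
        simp only [Prod.mk.injEq]
        constructor
        · rintro ⟨h1, -⟩; exact h1
        · intro h1
          refine ⟨h1, funext fun i => absurd i.2 (Finset.notMem_empty i.1)⟩
      rw [h]
      simp
  | @insert j D hj ih =>
      have hsplit : ent s.p (fun ω => (s.F ω, s.jointW (insert j D) ω))
          = ent s.p (fun ω => ((s.F ω, s.jointW D ω), s.W j ω)) := by
        apply ent_congr s.p_nonneg
        intro ω₁ ω₂
        simp only [Prod.mk.injEq]
        constructor
        · rintro ⟨h1, h2⟩
          refine ⟨⟨h1, funext fun i => ?_⟩, ?_⟩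
          · exact congrFun h2 ⟨i.1, Finset.mem_insert_of_mem i.2⟩
          · exact congrFun h2 ⟨j, Finset.mem_insert_self j D⟩
        · rintro ⟨⟨h1, h2⟩, h3⟩
          refine ⟨h1, funext fun i => ?_⟩
          rcases Finset.mem_insert.1 i.2 with h | h
          · show s.W i.1 ω₁ = s.W i.1 ω₂
            rw [h]
            exact h3
          · exact congrFun h2 ⟨i.1, h⟩
      rw [hsplit]
      calc ent s.p (fun ω => ((s.F ω, s.jointW D ω), s.W j ω))
          ≤ ent s.p (fun ω => (s.F ω, s.jointW D ω)) + ent s.p (s.W j) :=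
            ent_pair_le s.p_nonneg s.p_sum _ _
        _ ≤ ent s.p s.F + D.card * s.L + s.L := by
            rw [s.W_ent j]
            linarith [ih]
        _ = ent s.p s.F + (insert j D).card * s.L := by
            rw [Finset.card_insert_of_notMem hj]
            push_cast
            ring

/-- `H(W_k | F, W_C) ≥ L` whenever `k ∉ C`. -/
lemma condEnt_W_ge (k : Fin K) (C : Finset (Fin K)) (hk : k ∉ C) :
    s.L ≤ condEnt s.p (s.W k) (fun ω => (s.F ω, s.jointW C ω)) := by
  classical
  set E : Finset (Fin K) := Finset.univ.erase k with hE
  have step1 : condEnt s.p (s.W k)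
        (fun ω => (s.jointW E ω, (s.F ω, s.jointW C ω)))
      ≤ condEnt s.p (s.W k) (fun ω => (s.F ω, s.jointW C ω)) :=
    condEnt_pair_le s.p_nonneg s.p_sum _ _ _
  have step2 : condEnt s.p (s.W k)
        (fun ω => (s.jointW E ω, (s.F ω, s.jointW C ω)))
      = condEnt s.p (s.W k) (fun ω => (s.F ω, s.jointW E ω)) := by
    apply condEnt_congr_right s.p_nonneg
    intro ω₁ ω₂
    simp only [Prod.mk.injEq]
    constructor
    · rintro ⟨h1, h2, h3⟩
      exact ⟨h2, h1⟩
    · rintro ⟨h1, h2⟩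
      refine ⟨h2, h1, funext fun i => ?_⟩
      have hiE : i.1 ∈ E := by
        apply Finset.mem_erase.2
        refine ⟨?_, Finset.mem_univ _⟩
        intro hik
        exact hk (hik ▸ i.2)
      exact congrFun h2 ⟨i.1, hiE⟩
  have step3 : ent s.p (fun ω => (s.W k ω, (s.F ω, s.jointW E ω)))
      = ent s.p (fun ω => (s.F ω, s.Wvec ω)) := by
    apply ent_congr s.p_nonneg
    intro ω₁ ω₂
    simp only [Prod.mk.injEq]
    constructor
    · rintro ⟨h1, h2, h3⟩
      refine ⟨h2, funext fun j => ?_⟩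
      by_cases hjk : j = k
      · show s.W j ω₁ = s.W j ω₂
        rw [hjk]
        exact h1
      · exact congrFun h3 ⟨j, Finset.mem_erase.2 ⟨hjk, Finset.mem_univ _⟩⟩
    · rintro ⟨h1, h2⟩
      exact ⟨congrFun h2 k, h1, funext fun i => congrFun h2 i.1⟩
  have hcard : (E.card : ℝ) = (K : ℝ) - 1 := by
    rw [hE, Finset.card_erase_of_mem (Finset.mem_univ k), Finset.card_univ, Fintype.card_fin]
    have hK : 1 ≤ K := k.pos
    push_cast [Nat.cast_sub hK]
    ring
  have step4 : ent s.p (fun ω => (s.F ω, s.jointW E ω))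
      ≤ ent s.p s.F + ((K : ℝ) - 1) * s.L := by
    have := s.ent_F_jointW_le E
    rw [hcard] at this
    exact this
  have step5 : s.L ≤ condEnt s.p (s.W k) (fun ω => (s.F ω, s.jointW E ω)) := by
    rw [condEnt, step3, s.ent_F_Wvec]
    have := step4
    nlinarith [s.L_pos]
  linarith [step1, step2 ▸ step5]

/-- Correctness: `H(Avec | F, W_C) = H(W_k | F, W_C) + H(Avec | W_k, F, W_C)`. -/
lemma condEnt_correct (k : Fin K) (C : Finset (Fin K)) :
    condEnt s.p (s.Avec k) (fun ω => (s.F ω, s.jointW C ω))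
      = condEnt s.p (s.W k) (fun ω => (s.F ω, s.jointW C ω))
        + condEnt s.p (s.Avec k) (fun ω => (s.W k ω, (s.F ω, s.jointW C ω))) := by
  obtain ⟨gdec, hdec⟩ := s.correct k
  choose gQ hgQ using s.Q_det k
  have hWdet : ∀ ω, s.W k ω = gdec (s.Avec k ω) (fun n => gQ n (s.F ω)) := by
    intro ω
    rw [hdec ω]
    congr 1
    funext n
    rw [hgQ n ω]
  have h1 : condEnt s.p (s.Avec k) (fun ω => (s.F ω, s.jointW C ω))
      = condEnt s.p (fun ω => (s.Avec k ω, s.W k ω)) (fun ω => (s.F ω, s.jointW C ω)) := by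
    rw [condEnt, condEnt]
    congr 1
    apply ent_congr s.p_nonneg
    intro ω₁ ω₂
    simp only [Prod.mk.injEq]
    constructor
    · rintro ⟨h1, h2, h3⟩
      refine ⟨⟨h1, ?_⟩, h2, h3⟩
      rw [hWdet ω₁, hWdet ω₂, h1, h2]
    · rintro ⟨⟨h1, -⟩, h2, h3⟩
      exact ⟨h1, h2, h3⟩
  rw [h1, condEnt_chain s.p_nonneg (s.Avec k) (s.W k) (fun ω => (s.F ω, s.jointW C ω))]
  ring

end PIRScheme

lemma finLt_succ {K : ℕ} (m : ℕ) (k : Fin K) (hk : k.val = m) :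
    finLt K (m + 1) = insert k (finLt K m) := by
  classical
  ext i
  simp only [finLt, Finset.mem_filter, Finset.mem_univ, true_and, Finset.mem_insert,
    Fin.ext_iff, hk]
  omega

lemma not_mem_finLt {K : ℕ} (k : Fin K) : k ∉ finLt K k.val := by
  simp [finLt]

namespace PIRScheme

variable {N K : ℕ} (s : PIRScheme N K)

lemma condEnt_jointA_le {γ : Type} (k : Fin K) (Z : s.Ω → γ) (B : Finset (Fin N)) :
    condEnt s.p (s.jointA k B) Z ≤ ∑ n ∈ B, condEnt s.p (s.A k n) Z := by
  classical
  induction B using Finset.induction_on with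
  | empty =>
      have h : condEnt s.p (s.jointA k ∅) Z = 0 := by
        rw [condEnt]
        have he : ent s.p (fun ω => (s.jointA k ∅ ω, Z ω)) = ent s.p Z := by
          apply ent_congr s.p_nonneg
          intro ω₁ ω₂
          simp only [Prod.mk.injEq]
          constructor
          · rintro ⟨-, h2⟩; exact h2
          · intro h2
            exact ⟨funext fun i => absurd i.2 (Finset.notMem_empty i.1), h2⟩
        rw [he]; ring
      rw [h, Finset.sum_empty]
  | @insert n B hn ih =>
      have hsplit : condEnt s.p (s.jointA k (insert n B)) Z
          = condEnt s.p (fun ω => (s.A k n ω, s.jointA k B ω)) Z := by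
        apply condEnt_congr_left s.p_nonneg
        intro ω₁ ω₂
        constructor
        · intro h
          refine Prod.ext ?_ ?_
          · exact congrFun h ⟨n, Finset.mem_insert_self n B⟩
          · exact funext fun i => congrFun h ⟨i.1, Finset.mem_insert_of_mem i.2⟩
        · intro h
          have h1 : s.A k n ω₁ = s.A k n ω₂ := congrArg Prod.fst h
          have h2 : s.jointA k B ω₁ = s.jointA k B ω₂ := congrArg Prod.snd h
          funext i
          rcases Finset.mem_insert.1 i.2 with hi | hi
          · show s.A k i.1 ω₁ = s.A k i.1 ω₂
            rw [hi]
            exact h1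
          · exact congrFun h2 ⟨i.1, hi⟩
      rw [hsplit, condEnt_chain s.p_nonneg (s.A k n) (s.jointA k B) Z,
        Finset.sum_insert hn]
      have hc := condEnt_pair_le s.p_nonneg s.p_sum (s.A k n) (s.jointA k B) Z
      linarith [ih]

lemma condEnt_Avec_le {γ : Type} (k : Fin K) (Z : s.Ω → γ) :
    condEnt s.p (s.Avec k) Z ≤ ∑ n : Fin N, condEnt s.p (s.A k n) Z := by
  have h : condEnt s.p (s.Avec k) Z = condEnt s.p (s.jointA k Finset.univ) Z := by
    apply condEnt_congr_left s.p_nonneg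
    intro ω₁ ω₂
    constructor
    · intro h
      exact funext fun i => congrFun h i.1
    · intro h
      exact funext fun n => congrFun h ⟨n, Finset.mem_univ n⟩
  rw [h]
  exact s.condEnt_jointA_le k Z Finset.univ

lemma condEnt_le_Avec {γ : Type} (k : Fin K) (n : Fin N) (Z : s.Ω → γ) :
    condEnt s.p (s.A k n) Z ≤ condEnt s.p (s.Avec k) Z := by
  have h1 : condEnt s.p (s.A k n) Z
      ≤ condEnt s.p (fun ω => (s.Avec k ω, s.A k n ω)) Z :=
    condEnt_le_pair s.p_nonneg (s.Avec k) (s.A k n) Z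
  have h2 : condEnt s.p (fun ω => (s.Avec k ω, s.A k n ω)) Z
      = condEnt s.p (s.Avec k) Z := by
    apply condEnt_congr_left s.p_nonneg
    intro ω₁ ω₂
    constructor
    · intro h
      exact congrArg Prod.fst h
    · intro h
      exact Prod.ext h (congrFun h n)
  linarith

lemma condEnt_merge (k : Fin K) (C : Finset (Fin K)) :
    condEnt s.p (s.Avec k) (fun ω => (s.W k ω, (s.F ω, s.jointW C ω)))
      = condEnt s.p (s.Avec k) (fun ω => (s.F ω, s.jointW (insert k C) ω)) := by
  classical
  apply condEnt_congr_right s.p_nonneg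
  intro ω₁ ω₂
  simp only [Prod.mk.injEq]
  constructor
  · rintro ⟨h1, h2, h3⟩
    refine ⟨h2, funext fun i => ?_⟩
    rcases Finset.mem_insert.1 i.2 with hi | hi
    · show s.W i.1 ω₁ = s.W i.1 ω₂
      rw [hi]
      exact h1
    · exact congrFun h3 ⟨i.1, hi⟩
  · rintro ⟨h1, h2⟩
    exact ⟨congrFun h2 ⟨k, Finset.mem_insert_self k C⟩, h1,
      funext fun i => congrFun h2 ⟨i.1, Finset.mem_insert_of_mem i.2⟩⟩


/-- The central induction: the per-server download at level `k` is at least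
`L ∑_{i<K-k} N^{-i}`. -/
lemma D_bound (hN : 1 ≤ N) : ∀ (j : ℕ) (k : Fin K), K - k.val = j →
    s.L * (∑ i ∈ Finset.range j, ((N : ℝ))⁻¹ ^ i)
      ≤ ∑ n : Fin N, condEnt s.p (s.A k n)
          (fun ω => (s.Q k n ω, s.jointW (finLt K k.val) ω)) := by
  classical
  have hNR : (0:ℝ) < (N:ℝ) := by exact_mod_cast hN
  intro j
  induction j using Nat.strong_induction_on with
  | _ j ih =>
    intro k hk
    have hj1 : 1 ≤ j := by omega
    obtain ⟨m, rfl⟩ : ∃ m, j = m + 1 := ⟨j - 1, by omega⟩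
    set C : Finset (Fin K) := finLt K k.val with hC
    -- bridge each server
    have hb : ∀ n : Fin N, condEnt s.p (s.A k n) (fun ω => (s.Q k n ω, s.jointW C ω))
        = condEnt s.p (s.A k n) (fun ω => (s.F ω, s.jointW C ω)) :=
      fun n => (s.condEnt_bridge k n C).symm
    have hsum : ∑ n : Fin N, condEnt s.p (s.A k n)
          (fun ω => (s.Q k n ω, s.jointW C ω))
        = ∑ n : Fin N, condEnt s.p (s.A k n) (fun ω => (s.F ω, s.jointW C ω)) :=
      Finset.sum_congr rfl (fun n _ => hb n)
    have hsub : condEnt s.p (s.Avec k) (fun ω => (s.F ω, s.jointW C ω))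
        ≤ ∑ n : Fin N, condEnt s.p (s.A k n) (fun ω => (s.F ω, s.jointW C ω)) :=
      s.condEnt_Avec_le k _
    have hcor := s.condEnt_correct k C
    have hW : s.L ≤ condEnt s.p (s.W k) (fun ω => (s.F ω, s.jointW C ω)) :=
      s.condEnt_W_ge k C (not_mem_finLt k)
    have hmerge := s.condEnt_merge k C
    set T : ℝ := condEnt s.p (s.Avec k)
      (fun ω => (s.F ω, s.jointW (insert k C) ω)) with hT
    have hchain : s.L + T ≤ ∑ n : Fin N, condEnt s.p (s.A k n)
        (fun ω => (s.Q k n ω, s.jointW C ω)) := by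
      rw [hsum]
      calc s.L + T ≤ condEnt s.p (s.W k) (fun ω => (s.F ω, s.jointW C ω)) + T := by
            linarith
        _ = condEnt s.p (s.Avec k) (fun ω => (s.F ω, s.jointW C ω)) := by
            rw [hcor, hmerge]
        _ ≤ _ := hsub
    by_cases hlast : k.val + 1 = K
    · -- m = 0
      have hm0 : m = 0 := by omega
      subst hm0
      have hT0 : 0 ≤ T := condEnt_nonneg s.p_nonneg _ _
      simpa [Finset.sum_range_one] using
        le_trans (by linarith : s.L * 1 ≤ s.L + T) hchain
    · have hk1 : k.val + 1 < K := by omega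
      set k' : Fin K := ⟨k.val + 1, hk1⟩ with hk'
      have hC' : finLt K (k'.val) = insert k C := by
        rw [hC]
        exact finLt_succ k.val k rfl
      have hIH := ih m (by omega) k' (by simp only [hk']; omega)
      rw [hC'] at hIH
      -- privacy + bridge + monotonicity at level k+1
      have hstep : ∀ n : Fin N,
          condEnt s.p (s.A k' n) (fun ω => (s.Q k' n ω, s.jointW (insert k C) ω)) ≤ T := by
        intro n
        rw [← s.condEnt_privacy n (insert k C) k k', ← s.condEnt_bridge k n (insert k C)]
        exact s.condEnt_le_Avec k n _
      have hNT : s.L * (∑ i ∈ Finset.range m, ((N : ℝ))⁻¹ ^ i) ≤ (N : ℝ) * T := by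
        calc s.L * _ ≤ ∑ n : Fin N, condEnt s.p (s.A k' n)
              (fun ω => (s.Q k' n ω, s.jointW (insert k C) ω)) := hIH
          _ ≤ ∑ _n : Fin N, T := Finset.sum_le_sum (fun n _ => hstep n)
          _ = (N : ℝ) * T := by
              rw [Finset.sum_const, Finset.card_univ, Fintype.card_fin, nsmul_eq_mul]
      have hgeom : s.L * (∑ i ∈ Finset.range (m + 1), ((N : ℝ))⁻¹ ^ i)
          = s.L + ((N : ℝ))⁻¹ * (s.L * (∑ i ∈ Finset.range m, ((N : ℝ))⁻¹ ^ i)) := by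
        rw [geom_sum_succ]
        ring
      rw [hgeom]
      have hTfrac : ((N : ℝ))⁻¹ * (s.L * (∑ i ∈ Finset.range m, ((N : ℝ))⁻¹ ^ i)) ≤ T := by
        have h := mul_le_mul_of_nonneg_left hNT (by positivity : (0:ℝ) ≤ ((N : ℝ))⁻¹)
        have h2 : ((N : ℝ))⁻¹ * ((N : ℝ) * T) = T := by
          field_simp
        linarith
      linarith

end PIRScheme

lemma finLt_zero (K : ℕ) : finLt K 0 = (∅ : Finset (Fin K)) := by
  ext i
  simp [finLt]

/-- Proposition 1(ii), download part: every `(N,K)` PIR scheme satisfies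
`β ≥ β₀ = ∑_{i=1}^K N^{-i}`. -/
theorem stmt2 (N K : ℕ) (hN : 2 ≤ N) (hK : 1 ≤ K) (s : PIRScheme N K) :
    ∑ i ∈ Finset.Icc 1 K, ((N : ℝ))⁻¹ ^ i ≤ s.betaAt ⟨0, by omega⟩ := by
  classical
  set k0 : Fin K := ⟨0, by omega⟩ with hk0
  have hNR : (0:ℝ) < (N:ℝ) := by
    have : 0 < N := by omega
    exact_mod_cast this
  choose gQ hgQ using s.Q_det k0
  -- from the `betaAt` conditioning to the per-server conditioning
  have hfirst : ∀ n : Fin N,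
      condEnt s.p (s.A k0 n) (fun ω => (s.Q k0 n ω, s.jointW (finLt K k0.val) ω))
        ≤ condEnt s.p (s.A k0 n) (fun ω => (fun n' : Fin N => s.Q k0 n' ω)) := by
    intro n
    have h1 : condEnt s.p (s.A k0 n)
        (fun ω => ((s.F ω, s.jointW (finLt K k0.val) ω), (fun n' : Fin N => s.Q k0 n' ω)))
        ≤ condEnt s.p (s.A k0 n) (fun ω => (fun n' : Fin N => s.Q k0 n' ω)) :=
      condEnt_pair_le s.p_nonneg s.p_sum _ _ _
    have h2 : condEnt s.p (s.A k0 n)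
        (fun ω => ((s.F ω, s.jointW (finLt K k0.val) ω), (fun n' : Fin N => s.Q k0 n' ω)))
        = condEnt s.p (s.A k0 n) (fun ω => (s.F ω, s.jointW (finLt K k0.val) ω)) := by
      apply condEnt_congr_right s.p_nonneg
      intro ω₁ ω₂
      constructor
      · intro h
        exact congrArg Prod.fst h
      · intro h
        refine Prod.ext h (funext fun n' => ?_)
        show s.Q k0 n' ω₁ = s.Q k0 n' ω₂
        rw [hgQ n' ω₁, hgQ n' ω₂, show s.F ω₁ = s.F ω₂ from congrArg Prod.fst h]
    have h3 := s.condEnt_bridge k0 n (finLt K k0.val)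
    linarith
  have hD := s.D_bound (by omega) K k0 (by simp [hk0])
  have hsum : s.L * (∑ i ∈ Finset.range K, ((N : ℝ))⁻¹ ^ i)
      ≤ ∑ n : Fin N, condEnt s.p (s.A k0 n) (fun ω => (fun n' : Fin N => s.Q k0 n' ω)) :=
    le_trans hD (Finset.sum_le_sum (fun n _ => hfirst n))
  -- unfold betaAt
  rw [PIRScheme.betaAt]
  have hIcc : ∑ i ∈ Finset.Icc 1 K, ((N : ℝ))⁻¹ ^ i
      = ((N : ℝ))⁻¹ * ∑ i ∈ Finset.range K, ((N : ℝ))⁻¹ ^ i := by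
    have h1 : Finset.range (K + 1) = insert 0 (Finset.Icc 1 K) := by
      ext i
      simp only [Finset.mem_range, Finset.mem_insert, Finset.mem_Icc]
      omega
    have h2 : ∑ i ∈ Finset.range (K + 1), ((N : ℝ))⁻¹ ^ i
        = 1 + ∑ i ∈ Finset.Icc 1 K, ((N : ℝ))⁻¹ ^ i := by
      rw [h1, Finset.sum_insert (by simp)]
      norm_num
    have h3 := geom_sum_succ (x := ((N : ℝ))⁻¹) (n := K)
    rw [h3] at h2
    linarith
  rw [hIcc]
  have hpos : (0:ℝ) < (N : ℝ) * s.L := mul_pos hNR s.L_pos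
  have hmul := mul_le_mul_of_nonneg_left hsum (le_of_lt (one_div_pos.2 hpos))
  have heq : 1 / ((N : ℝ) * s.L) * (s.L * (∑ i ∈ Finset.range K, ((N : ℝ))⁻¹ ^ i))
      = ((N : ℝ))⁻¹ * ∑ i ∈ Finset.range K, ((N : ℝ))⁻¹ ^ i := by
    field_simp [s.L_pos.ne']
  rw [heq] at hmul
  exact hmul
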